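/- Let U_n, V_n, U_{n+1}, V_{n+1}, u_1, v_1 ∈ ℝ satisfy the implicit midpoint-type relations u₁ = U_n + (h/2)(-e^{v₁} + 1), v₁ = V_n + (h/2)(e^{u₁} - 3/2) + J/2, U_{n+1} = U_n + h(-e^{v₁} + 1), V_{n+1} = V_n + h(e^{u₁} - 3/2) + J, for fixed h, J ∈ ℝ, and view (U_{n+1}, V_{n+1}) as a differentiable function of (U_n, V_n). Then the Jacobian matrix M = ∂(U_{n+1},V_{n+1})/∂(U_n,V_n) satisfies det M = 1 (equivalently Mᵀ J₂ M = J₂ with J₂ = [[0,1],[-1,0]]), i.e. the one-stage scheme preserves the canonical symplectic two-form dU ∧ dV. -/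

import Mathlib

open Matrix

/-- The Jacobian matrix of a map `f : ℝⁿ → ℝᵐ` at a point `z`. -/
noncomputable def jacobianMatrix {n m : ℕ} (f : (Fin n → ℝ) → (Fin m → ℝ))
    (z : Fin n → ℝ) : Matrix (Fin m) (Fin n) ℝ :=
  Matrix.of fun i j => fderiv ℝ f z (Pi.single j 1) i

lemma aux_symp (M : Matrix (Fin 2) (Fin 2) ℝ) (hdet : M.det = 1) :
    Mᵀ * !![0, 1; -1, 0] * M = !![0, 1; -1, 0] := by
  rw [Matrix.det_fin_two] at hdet
  ext i j
  fin_cases i <;> fin_cases j <;>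
    simp [Matrix.mul_apply, Fin.sum_univ_two] <;> linarith

theorem stmt_16 (h J : ℝ) (u₁ v₁ : (Fin 2 → ℝ) → ℝ) (F : (Fin 2 → ℝ) → (Fin 2 → ℝ))
    (hu₁ : Differentiable ℝ u₁) (hv₁ : Differentiable ℝ v₁) (hF : Differentiable ℝ F)
    (hstage₁ : ∀ z : Fin 2 → ℝ, u₁ z = z 0 + h / 2 * (-Real.exp (v₁ z) + 1))
    (hstage₂ : ∀ z : Fin 2 → ℝ, v₁ z = z 1 + h / 2 * (Real.exp (u₁ z) - 3 / 2) + J / 2)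
    (hstep₁ : ∀ z : Fin 2 → ℝ, F z 0 = z 0 + h * (-Real.exp (v₁ z) + 1))
    (hstep₂ : ∀ z : Fin 2 → ℝ, F z 1 = z 1 + h * (Real.exp (u₁ z) - 3 / 2) + J) :
    ∀ z : Fin 2 → ℝ,
      (jacobianMatrix F z).det = 1 ∧
      (jacobianMatrix F z)ᵀ * !![0, 1; -1, 0] * jacobianMatrix F z = !![0, 1; -1, 0] := by
  intro z
  have hEv : (0:ℝ) < Real.exp (v₁ z) := Real.exp_pos _
  have hEu : (0:ℝ) < Real.exp (u₁ z) := Real.exp_pos _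
  set Ev := Real.exp (v₁ z)
  set Eu := Real.exp (u₁ z)
  have hv₁' : HasFDerivAt v₁ (fderiv ℝ v₁ z) z := (hv₁ z).hasFDerivAt
  have hu₁' : HasFDerivAt u₁ (fderiv ℝ u₁ z) z := (hu₁ z).hasFDerivAt
  have hproj := fun i : Fin 2 =>
    hasFDerivAt_apply (𝕜 := ℝ) (F' := fun _ : Fin 2 => ℝ) i z
  -- derivative relations for the stages
  have hu : ∀ w : Fin 2 → ℝ, fderiv ℝ u₁ z w
      = w 0 + h / 2 * (-(Ev * fderiv ℝ v₁ z w)) := by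
    have hfun : u₁ = fun y => y 0 + h / 2 * (-Real.exp (v₁ y) + 1) := funext hstage₁
    have hd : HasFDerivAt (fun y : Fin 2 → ℝ => y 0 + h / 2 * (-Real.exp (v₁ y) + 1))
        (ContinuousLinearMap.proj 0 + (h / 2) • (-(Ev • fderiv ℝ v₁ z))) z :=
      (hproj 0).add ((hv₁'.exp.neg.add_const 1).const_mul (h / 2))
    intro w
    rw [hfun, hd.fderiv]
    simp
  have hv : ∀ w : Fin 2 → ℝ, fderiv ℝ v₁ z w
      = w 1 + h / 2 * (Eu * fderiv ℝ u₁ z w) := by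
    have hfun : v₁ = fun y => y 1 + h / 2 * (Real.exp (u₁ y) - 3 / 2) + J / 2 :=
      funext hstage₂
    have hd : HasFDerivAt
        (fun y : Fin 2 → ℝ => y 1 + h / 2 * (Real.exp (u₁ y) - 3 / 2) + J / 2)
        ((ContinuousLinearMap.proj 1 + (h / 2) • (Eu • fderiv ℝ u₁ z))) z :=
      ((hproj 1).add ((hu₁'.exp.sub_const (3 / 2)).const_mul (h / 2))).add_const (J / 2)
    intro w
    rw [hfun, hd.fderiv]
    simp
  -- component derivatives of F
  have hFi : ∀ (i : Fin 2) (w : Fin 2 → ℝ),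
      fderiv ℝ F z w i = fderiv ℝ (fun y => F y i) z w := by
    intro i w
    have h1 : HasFDerivAt (fun y => F y i)
        ((ContinuousLinearMap.proj i).comp (fderiv ℝ F z)) z :=
      hasFDerivAt_pi'.1 (hF z).hasFDerivAt i
    rw [h1.fderiv]
    rfl
  have hM0 : ∀ w : Fin 2 → ℝ, fderiv ℝ F z w 0
      = w 0 + h * (-(Ev * fderiv ℝ v₁ z w)) := by
    intro w
    rw [hFi 0 w]
    have hfun : (fun y => F y 0) = fun y => y 0 + h * (-Real.exp (v₁ y) + 1) :=
      funext hstep₁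
    have hd : HasFDerivAt (fun y : Fin 2 → ℝ => y 0 + h * (-Real.exp (v₁ y) + 1))
        (ContinuousLinearMap.proj 0 + h • (-(Ev • fderiv ℝ v₁ z))) z :=
      (hproj 0).add ((hv₁'.exp.neg.add_const 1).const_mul h)
    rw [hfun, hd.fderiv]
    simp
  have hM1 : ∀ w : Fin 2 → ℝ, fderiv ℝ F z w 1
      = w 1 + h * (Eu * fderiv ℝ u₁ z w) := by
    intro w
    rw [hFi 1 w]
    have hfun : (fun y => F y 1) = fun y => y 1 + h * (Real.exp (u₁ y) - 3 / 2) + J :=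
      funext hstep₂
    have hd : HasFDerivAt
        (fun y : Fin 2 → ℝ => y 1 + h * (Real.exp (u₁ y) - 3 / 2) + J)
        ((ContinuousLinearMap.proj 1 + h • (Eu • fderiv ℝ u₁ z))) z :=
      ((hproj 1).add ((hu₁'.exp.sub_const (3 / 2)).const_mul h)).add_const J
    rw [hfun, hd.fderiv]
    simp
  -- abbreviations for the stage derivatives in the two coordinate directions
  set α₀ := fderiv ℝ u₁ z (Pi.single 0 1) with hα₀
  set α₁ := fderiv ℝ u₁ z (Pi.single 1 1) with hα₁
  set β₀ := fderiv ℝ v₁ z (Pi.single 0 1) with hβ₀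
  set β₁ := fderiv ℝ v₁ z (Pi.single 1 1) with hβ₁
  have e1 : α₀ = 1 + h / 2 * (-(Ev * β₀)) := by
    have := hu (Pi.single 0 1); simpa using this
  have e2 : β₀ = h / 2 * (Eu * α₀) := by
    have := hv (Pi.single 0 1); simpa using this
  have e3 : α₁ = h / 2 * (-(Ev * β₁)) := by
    have := hu (Pi.single 1 1); simpa using this
  have e4 : β₁ = 1 + h / 2 * (Eu * α₁) := by
    have := hv (Pi.single 1 1); simpa using this
  -- matrix entries
  have m00 : jacobianMatrix F z 0 0 = 1 + h * (-(Ev * β₀)) := by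
    show fderiv ℝ F z (Pi.single 0 1) 0 = _
    rw [hM0]; simp; left; left; rfl
  have m01 : jacobianMatrix F z 0 1 = h * (-(Ev * β₁)) := by
    show fderiv ℝ F z (Pi.single 1 1) 0 = _
    rw [hM0]; simp; left; left; rfl
  have m10 : jacobianMatrix F z 1 0 = h * (Eu * α₀) := by
    show fderiv ℝ F z (Pi.single 0 1) 1 = _
    rw [hM1]; simp; left; left; rfl
  have m11 : jacobianMatrix F z 1 1 = 1 + h * (Eu * α₁) := by
    show fderiv ℝ F z (Pi.single 1 1) 1 = _
    rw [hM1]; simp; left; left; rfl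
  -- solve the linear system
  have hD : (1 + (h / 2) ^ 2 * (Ev * Eu)) ≠ 0 := by positivity
  have hα₀v : α₀ = 1 / (1 + (h / 2) ^ 2 * (Ev * Eu)) := by
    rw [eq_div_iff hD]
    linear_combination e1 - h / 2 * Ev * e2
  have hβ₁v : β₁ = 1 / (1 + (h / 2) ^ 2 * (Ev * Eu)) := by
    rw [eq_div_iff hD]
    linear_combination e4 + h / 2 * Eu * e3
  have hβ₀v : β₀ = h / 2 * Eu / (1 + (h / 2) ^ 2 * (Ev * Eu)) := by
    rw [e2, hα₀v]; ring
  have hα₁v : α₁ = -(h / 2 * Ev) / (1 + (h / 2) ^ 2 * (Ev * Eu)) := by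
    rw [e3, hβ₁v]; ring
  have hdet : (jacobianMatrix F z).det = 1 := by
    rw [Matrix.det_fin_two, m00, m01, m10, m11, hα₀v, hβ₁v, hβ₀v, hα₁v]
    field_simp
    ring
  exact ⟨hdet, aux_symp _ hdet⟩
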